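/- For all integers m ≥ 1, l, all integers r, r', all integers k ≥ 0, and all z ∈ ℤ/mℤ: Π_{j=1}^{k} ω_l( r·z, (r'−j·r)·z, r·z ) = ( α^l_{r·z}(r·z) )^{k} · α^l_{r·z}( (r'−k·r)·z ) / α^l_{r·z}( r'·z ), where n·z denotes the action of the integer n on z ∈ ℤ/mℤ. -/

import Mathlib

/-- `ζ_n = exp(2πi/n)`. -/
noncomputable def zetaC (n : ℕ) : ℂ := Complex.exp (2 * Real.pi * Complex.I / n)

/-- The 3-cocycle `ω_l(x,y,z) = ζ_m^{l·x̃·⌊(ỹ+z̃)/m⌋}` on `ℤ/mℤ`. -/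
noncomputable def omegaL (m : ℕ) (l : ℤ) (x y z : ZMod m) : ℂ :=
  zetaC m ^ (l * (x.val : ℤ) * (((y.val + z.val) / m : ℕ) : ℤ))

/-- `α^l_h(x) = ζ_{m²}^{l·h̃·x̃}`. -/
noncomputable def alphaL (m : ℕ) (l : ℤ) (h x : ZMod m) : ℂ :=
  zetaC (m ^ 2) ^ (l * (h.val : ℤ) * (x.val : ℤ))

lemma zetaC_ne_zero (n : ℕ) : zetaC n ≠ 0 := Complex.exp_ne_zero _

lemma alphaL_ne_zero (m : ℕ) (l : ℤ) (h x : ZMod m) : alphaL m l h x ≠ 0 :=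
  zpow_ne_zero _ (zetaC_ne_zero _)

lemma zetaC_pow (m : ℕ) (hm : 1 ≤ m) : zetaC (m ^ 2) ^ (m : ℤ) = zetaC m := by
  have hm0 : (m : ℂ) ≠ 0 := Nat.cast_ne_zero.mpr (by omega)
  rw [zetaC, zetaC, zpow_natCast, ← Complex.exp_nat_mul]
  congr 1
  push_cast
  field_simp

lemma omega_key (m : ℕ) (hm : 1 ≤ m) (l : ℤ) (h y x : ZMod m) :
    omegaL m l h y x = alphaL m l h y * alphaL m l h x / alphaL m l h (y + x) := by
  haveI : NeZero m := ⟨by omega⟩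
  have hz := zetaC_ne_zero (m ^ 2)
  have hval : (y.val + x.val : ℕ) = m * ((y.val + x.val) / m) + (y + x).val := by
    rw [ZMod.val_add]; exact (Nat.div_add_mod _ _).symm
  have hval' : ((y.val : ℤ) + x.val)
      = (m : ℤ) * (((y.val + x.val) / m : ℕ) : ℤ) + ((y + x).val : ℤ) := by
    exact_mod_cast hval
  rw [omegaL, alphaL, alphaL, alphaL, ← zetaC_pow m hm, ← zpow_mul,
    ← zpow_add₀ hz, ← zpow_sub₀ hz]
  congr 1
  linear_combination (-(l * (h.val : ℤ))) * hval'

/- The product over `j ∈ range k` corresponds to the product over `j = 1, …, k`. -/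
theorem statement9 (m : ℕ) (hm : 1 ≤ m) (l : ℤ) (r r' : ℤ) (k : ℕ) (z : ZMod m) :
    (∏ j ∈ Finset.range k,
        omegaL m l (r • z) ((r' - ((j : ℤ) + 1) * r) • z) (r • z)) =
      (alphaL m l (r • z) (r • z)) ^ k * alphaL m l (r • z) ((r' - (k : ℤ) * r) • z) /
        alphaL m l (r • z) (r' • z) := by
  induction k with
  | zero =>
      simp only [Finset.prod_range_zero, Nat.cast_zero, zero_mul, sub_zero, pow_zero, one_mul]
      exact (div_self (alphaL_ne_zero m l (r • z) (r' • z))).symm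
  | succ k ih =>
      rw [Finset.prod_range_succ, ih, omega_key m hm]
      have key : (r' - ((k : ℤ) + 1) * r) • z + r • z = (r' - (k : ℤ) * r) • z := by
        rw [← add_zsmul]; ring_nf
      rw [key]
      have hcast : ((k + 1 : ℕ) : ℤ) = (k : ℤ) + 1 := by push_cast; ring
      rw [hcast]
      have h1 := alphaL_ne_zero m l (r • z) (r' • z)
      have h2 := alphaL_ne_zero m l (r • z) ((r' - (k : ℤ) * r) • z)
      set A := alphaL m l (r • z) (r • z)
      set F0 := alphaL m l (r • z) (r' • z)
      set Fk := alphaL m l (r • z) ((r' - (k : ℤ) * r) • z)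
      set F' := alphaL m l (r • z) ((r' - ((k : ℤ) + 1) * r) • z)
      field_simp
      ring
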